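/- Let E be a finite-dimensional real normed vector space, Γ₀ ⊂ E a ℤ-lattice (a discrete additive subgroup spanning E over ℝ), and E₁, E₂ ⊆ E vector subspaces with E = E₁ ⊕ E₂. Let f : E → E be a linear endomorphism such that f(Γ₀) ⊆ Γ₀, f(E₁) ⊆ E₁, f(E₂) ⊆ E₂, and the restriction of f − Id to E₁ is injective (equivalently, invertible as a map E₁ → E₁). Let π₂ : E → E₂ denote the projection onto E₂ along E₁, and assume π₂(Γ₀) is dense in E₂. Then f − Id is invertible on E. -/

import Mathlib

/-- Let `E` be a finite-dimensional real normed vector space, `Γ₀` a ℤ-lattice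
in `E`, `E = E₁ ⊕ E₂` a direct sum decomposition, and `f : E → E` linear with
`f(Γ₀) ⊆ Γ₀`, `f(E₁) ⊆ E₁`, `f(E₂) ⊆ E₂`, and `(f − Id)|_{E₁}` injective. If the
projection `π₂(Γ₀)` onto `E₂` along `E₁` is dense in `E₂`, then `f − Id` is invertible. -/
theorem stmt_7 {E : Type*} [NormedAddCommGroup E] [NormedSpace ℝ E] [FiniteDimensional ℝ E]
    (Γ₀ : Submodule ℤ E) [DiscreteTopology Γ₀] [IsZLattice ℝ Γ₀]
    (E₁ E₂ : Submodule ℝ E) (hcompl : IsCompl E₁ E₂)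
    (f : E →ₗ[ℝ] E)
    (hΓ : ∀ x ∈ Γ₀, f x ∈ Γ₀)
    (hE₁ : ∀ x ∈ E₁, f x ∈ E₁)
    (hE₂ : ∀ x ∈ E₂, f x ∈ E₂)
    (hinj : ∀ x ∈ E₁, f x = x → x = 0)
    (hdense : closure ((fun x : E => ((Submodule.linearProjOfIsCompl E₂ E₁ hcompl.symm) x : E)) ''
      (Γ₀ : Set E)) = (E₂ : Set E)) :
    Function.Bijective (⇑(f - (LinearMap.id : E →ₗ[ℝ] E))) := by
  classical
  set g : E →ₗ[ℝ] E := f - LinearMap.id with hg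
  have hgapply : ∀ x : E, g x = f x - x := fun x => rfl
  suffices hI : Function.Injective ⇑g by
    exact ⟨hI, LinearMap.injective_iff_surjective.mp hI⟩
  by_contra hni
  -- a nonzero kernel vector
  rw [← LinearMap.ker_eq_bot] at hni
  obtain ⟨v, hvmem, hvne⟩ := Submodule.exists_mem_ne_zero_of_ne_bot hni
  -- lattice basis
  set b := Module.Free.chooseBasis ℤ Γ₀ with hb
  set ι := Module.Free.ChooseBasisIndex ℤ Γ₀
  set B : Module.Basis ι ℝ E := Module.Basis.ofZLatticeBasis ℝ Γ₀ b with hB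
  have hBmem : ∀ i, B i ∈ Γ₀ := fun i => by
    rw [hB, Module.Basis.ofZLatticeBasis_apply]; exact (b i).2
  -- g maps Γ₀ to Γ₀
  have hgΓ : ∀ x ∈ Γ₀, g x ∈ Γ₀ := fun x hx => by
    rw [hgapply]; exact sub_mem (hΓ x hx) hx
  -- the integer matrix of g
  set M : Matrix ι ι ℤ := fun i j => b.repr ⟨g (B j), hgΓ _ (hBmem j)⟩ i with hM
  have hMat : LinearMap.toMatrix B B g = M.map (Int.cast : ℤ → ℝ) := by
    ext i j
    rw [LinearMap.toMatrix_apply, Matrix.map_apply, hM, ← Module.Basis.ofZLatticeBasis_repr_apply]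
  -- det M = 0
  have hdet : M.det = 0 := by
    have h1 : (M.map (Int.cast : ℤ → ℝ)).det = 0 := by
      rw [← hMat]
      refine Matrix.exists_mulVec_eq_zero_iff.mp ⟨⇑(B.repr v), ?_, ?_⟩
      · intro h0
        apply hvne
        have : B.repr v = 0 := DFunLike.ext _ _ fun i => congrFun h0 i
        simpa using congrArg B.repr.symm this
      · have := LinearMap.toMatrix_mulVec_repr B B g v
        rw [LinearMap.mem_ker.mp hvmem] at this
        simpa using this
    have h2 : (Int.castRingHom ℝ) M.det = 0 := by
      rw [RingHom.map_det (Int.castRingHom ℝ) M]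
      exact h1
    have h3 : ((M.det : ℤ) : ℝ) = 0 := h2
    exact_mod_cast h3
  -- a nonzero integer covector annihilating the columns of M
  obtain ⟨c, hcne, hc⟩ := Matrix.exists_mulVec_eq_zero_iff.mpr
    (show (Matrix.transpose M).det = 0 by rwa [Matrix.det_transpose])
  -- the linear functional
  set φ : E →ₗ[ℝ] ℝ := ∑ i, (c i : ℝ) • B.coord i with hφ
  have hφB : ∀ j, φ (B j) = (c j : ℝ) := by
    intro j
    rw [hφ]
    simp only [LinearMap.coe_sum, Finset.sum_apply, LinearMap.smul_apply,
      Module.Basis.coord_apply, Module.Basis.repr_self, smul_eq_mul]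
    rw [Finset.sum_eq_single j]
    · simp
    · intro i _ hij
      simp [Finsupp.single_apply, hij.symm]
    · intro h; exact absurd (Finset.mem_univ j) h
  -- φ takes integer values on Γ₀
  have hφΓ : ∀ x, (hx : x ∈ Γ₀) → φ x = ((∑ i, c i * b.repr ⟨x, hx⟩ i : ℤ) : ℝ) := by
    intro x hx
    rw [hφ]
    simp only [LinearMap.coe_sum, Finset.sum_apply, LinearMap.smul_apply,
      Module.Basis.coord_apply, smul_eq_mul]
    push_cast
    refine Finset.sum_congr rfl fun i _ => ?_
    congr 1
    rw [hB]
    exact_mod_cast Module.Basis.ofZLatticeBasis_repr_apply ℝ Γ₀ b ⟨x, hx⟩ i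
  -- φ ∘ g = 0
  have hφg : ∀ x, φ (g x) = 0 := by
    have : φ.comp g = 0 := by
      apply B.ext
      intro j
      simp only [LinearMap.comp_apply, LinearMap.zero_apply]
      rw [hφΓ (g (B j)) (hgΓ _ (hBmem j))]
      have : ∑ i, c i * b.repr ⟨g (B j), hgΓ _ (hBmem j)⟩ i = (Matrix.transpose M).mulVec c j := by
        rw [Matrix.mulVec]
        simp [dotProduct, Matrix.transpose_apply, hM, mul_comm]
        rfl
      rw [this, hc]
      simp
    intro x
    exact DFunLike.congr_fun this x
  -- φ vanishes on E₁
  have hgE₁ : ∀ x ∈ E₁, g x ∈ E₁ := fun x hx => by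
    rw [hgapply]; exact sub_mem (hE₁ x hx) hx
  have hφE₁ : ∀ x ∈ E₁, φ x = 0 := by
    set g₁ : E₁ →ₗ[ℝ] E₁ := g.restrict hgE₁ with hg₁
    have hg₁inj : Function.Injective ⇑g₁ := by
      intro x y hxy
      have h0 : g₁ (x - y) = 0 := by rw [map_sub, hxy, sub_self]
      have : g ((x : E) - y) = 0 := by
        have := congrArg (Subtype.val) h0
        simpa [hg₁, LinearMap.restrict_apply] using this
      rw [hgapply, sub_eq_zero] at this
      have := hinj _ (sub_mem x.2 y.2) this
      exact Subtype.ext (sub_eq_zero.mp this)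
    have hg₁surj : Function.Surjective ⇑g₁ := LinearMap.injective_iff_surjective.mp hg₁inj
    intro x hx
    obtain ⟨y, hy⟩ := hg₁surj ⟨x, hx⟩
    have : g (y : E) = x := by
      have := congrArg (Subtype.val) hy
      simpa [hg₁, LinearMap.restrict_apply] using this
    rw [← this, hφg]
  -- the projection
  set π₂ := Submodule.linearProjOfIsCompl E₂ E₁ hcompl.symm with hπ₂
  have hπmem : ∀ x : E, x - (π₂ x : E) ∈ E₁ := by
    intro x
    rw [← Submodule.linearProjOfIsCompl_apply_eq_zero_iff (p := E₂) (q := E₁) hcompl.symm]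
    rw [map_sub]
    have : π₂ ((π₂ x : E)) = π₂ x := Submodule.linearProjOfIsCompl_apply_left hcompl.symm (π₂ x)
    exact sub_eq_zero.mpr this.symm
  have hφπ : ∀ x : E, φ ((π₂ x : E)) = φ x := by
    intro x
    have := hφE₁ _ (hπmem x)
    rw [map_sub] at this
    linarith
  -- φ maps the dense set into the integers
  have hφim : ∀ y ∈ (E₂ : Set E), ∃ n : ℤ, φ y = n := by
    intro y hy
    rw [← hdense] at hy
    have hcont : Continuous ⇑φ := φ.continuous_of_finiteDimensional
    have hsub : ⇑φ '' ((fun x : E => ((π₂ x : E))) '' (Γ₀ : Set E)) ⊆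
        Set.range ((↑) : ℤ → ℝ) := by
      rintro - ⟨-, ⟨x, hx, rfl⟩, rfl⟩
      rw [hφπ x, hφΓ x hx]
      exact ⟨_, rfl⟩
    have h1 : φ y ∈ closure (⇑φ '' ((fun x : E => ((π₂ x : E))) '' (Γ₀ : Set E))) :=
      image_closure_subset_closure_image hcont ⟨y, hy, rfl⟩
    have h2 : closure (⇑φ '' ((fun x : E => ((π₂ x : E))) '' (Γ₀ : Set E))) ⊆
        Set.range ((↑) : ℤ → ℝ) :=
      closure_minimal hsub Int.isClosedEmbedding_coe_real.isClosed_range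
    obtain ⟨n, hn⟩ := h2 h1
    exact ⟨n, hn.symm⟩
  -- derive the contradiction
  obtain ⟨j₀, hj₀⟩ := Function.ne_iff.mp hcne
  have hφx : φ (B j₀) ≠ 0 := by
    rw [hφB j₀]
    exact_mod_cast hj₀
  set w : E := (π₂ (B j₀) : E) with hw
  have hφw : φ w ≠ 0 := by rw [hw, hφπ]; exact hφx
  set y : E := (2 * φ w)⁻¹ • w with hy
  have hymem : y ∈ E₂ := Submodule.smul_mem _ _ (π₂ (B j₀)).2
  obtain ⟨n, hn⟩ := hφim y hymem
  rw [hy, map_smul, smul_eq_mul, mul_inv, mul_assoc, inv_mul_cancel₀ hφw, mul_one] at hn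
  have h2n : ((2 * n : ℤ) : ℝ) = 1 := by
    push_cast
    rw [← hn]
    norm_num
  have : (2 * n : ℤ) = 1 := by exact_mod_cast h2n
  omega
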